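/- Let G be a graph, R ⊆ G a subgraph, and ℓ a positive integer. Suppose that: (1) for every subset S ⊆ V(G) of size at most 2ℓ and every pair of vertices x, y ∈ V(G) \ S, there is an x–y path in R − S of length at most ℓ − 1; and (2) R ≠ G and R ≠ G[A,B] for every partition V(G) = A ∪ B. Then G contains an even cycle C of length at most 2ℓ containing an odd number of edges of R. -/

import Mathlib

open SimpleGraph

variable {V : Type} [Fintype V] [DecidableEq V]

/-- The bipartite subgraph `G[A,B]` of edges with one endpoint in `A`, one in `B`. -/
def bipSub (G : SimpleGraph V) (A B : Set V) : SimpleGraph V where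
  Adj x y := G.Adj x y ∧ ((x ∈ A ∧ y ∈ B) ∨ (x ∈ B ∧ y ∈ A))
  symm := by
    refine ⟨?_⟩
    intro x y h
    exact ⟨h.1.symm, by tauto⟩
  loopless := by
    refine ⟨?_⟩
    intro x h
    exact G.loopless.irrefl x h.1

set_option linter.unusedSectionVars false

section Aux

variable {G R : SimpleGraph V}

lemma mapLe_support (h : R ≤ G) {u v : V} (p : R.Walk u v) :
    (p.mapLe h).support = p.support := by
  induction p with
  | nil => rfl
  | cons h p ih => simp [Walk.mapLe, ih]

lemma mapLe_edges (h : R ≤ G) {u v : V} (p : R.Walk u v) :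
    (p.mapLe h).edges = p.edges := by
  induction p with
  | nil => rfl
  | cons h p ih => simp [Walk.mapLe, ih]

lemma mapLe_length (h : R ≤ G) {u v : V} (p : R.Walk u v) :
    (p.mapLe h).length = p.length := by
  simp [Walk.mapLe]

lemma ncard_support_le {u v : V} (p : R.Walk u v) :
    {z | z ∈ p.support}.ncard ≤ p.length + 1 := by
  have h : {z | z ∈ p.support} = (p.support.toFinset : Set V) := by
    ext z; simp
  rw [h, Set.ncard_coe_finset]
  calc p.support.toFinset.card ≤ p.support.length := List.toFinset_card_le _
    _ = p.length + 1 := p.length_support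

/-- From a `G`-edge `a b` not in `R` and two `R`-paths from `a` and `b` to a common
vertex `w`, sharing only `w`, with odd total length, build a "good" cycle. -/
lemma cyc (hRG : R ≤ G) {ℓ : ℕ}
    (hG : ∀ (u : V) (c : G.Walk u u), c.IsCycle → Even c.length → c.length ≤ 2 * ℓ →
      ¬ Odd ({e : Sym2 V | e ∈ c.edges ∧ e ∈ R.edgeSet}.ncard))
    {a b w : V} (hab : G.Adj a b) (hnR : ¬ R.Adj a b)
    (P : R.Walk a w) (Q : R.Walk b w) (hP : P.IsPath) (hQ : Q.IsPath)
    (hdisj : ∀ z ∈ P.support, z ∈ Q.support → z = w)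
    (hodd : Odd (P.length + Q.length)) (hlen : P.length + Q.length + 1 ≤ 2 * ℓ) : False := by
  set QR : R.Walk w b := Q.reverse with hQR
  set pg : G.Walk a b := (P.mapLe hRG).append (QR.mapLe hRG) with hpg
  have hsupg : pg.support = P.support ++ QR.support.tail := by
    rw [hpg, Walk.support_append, mapLe_support, mapLe_support]
  have hQRnodup : QR.support.Nodup := hQ.reverse.support_nodup
  have hQRc : (w :: QR.support.tail).Nodup := by
    rw [← QR.support_eq_cons]; exact hQRnodup
  have hwtail : w ∉ QR.support.tail := (List.nodup_cons.1 hQRc).1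
  have htailnodup : QR.support.tail.Nodup := (List.nodup_cons.1 hQRc).2
  have hpgpath : pg.IsPath := by
    rw [Walk.isPath_def, hsupg]
    refine List.Nodup.append hP.support_nodup htailnodup ?_
    intro z hzP hzQ
    have hzQ' : z ∈ QR.support := by
      rw [QR.support_eq_cons]; exact List.mem_cons_of_mem _ hzQ
    have hzQ'' : z ∈ Q.support := by
      rwa [hQR, Walk.support_reverse, List.mem_reverse] at hzQ'
    have := hdisj z hzP hzQ''
    subst this
    exact hwtail hzQ
  have hedg : pg.edges = P.edges ++ QR.edges := by
    rw [hpg, Walk.edges_append, mapLe_edges, mapLe_edges]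
  have hpgR : ∀ e ∈ pg.edges, e ∈ R.edgeSet := by
    intro e he
    rw [hedg, List.mem_append] at he
    rcases he with he | he
    · exact P.edges_subset_edgeSet he
    · exact QR.edges_subset_edgeSet he
  have hba : ¬ (s(b, a) ∈ pg.edges) := by
    intro hmem
    exact hnR (R.adj_symm (hpgR _ hmem))
  set c : G.Walk b b := Walk.cons hab.symm pg with hc
  have hcyc : c.IsCycle := (Walk.cons_isCycle_iff pg hab.symm).2 ⟨hpgpath, hba⟩
  have hclen : c.length = P.length + Q.length + 1 := by
    rw [hc, Walk.length_cons, hpg, Walk.length_append, mapLe_length, mapLe_length,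
      hQR, Walk.length_reverse]
  have hset : {e : Sym2 V | e ∈ c.edges ∧ e ∈ R.edgeSet} = {e : Sym2 V | e ∈ pg.edges} := by
    ext e
    simp only [Set.mem_setOf_eq, hc, Walk.edges_cons, List.mem_cons]
    constructor
    · rintro ⟨(rfl | he), heR⟩
      · exact absurd (R.adj_symm heR) hnR
      · exact he
    · intro he
      exact ⟨Or.inr he, hpgR _ he⟩
  have hncard : {e : Sym2 V | e ∈ c.edges ∧ e ∈ R.edgeSet}.ncard = P.length + Q.length := by
    rw [hset]
    have h1 : {e : Sym2 V | e ∈ pg.edges} = (pg.edges.toFinset : Set (Sym2 V)) := by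
      ext z; simp
    rw [h1, Set.ncard_coe_finset,
      List.toFinset_card_of_nodup hpgpath.isTrail.edges_nodup, Walk.length_edges,
      hpg, Walk.length_append, mapLe_length, mapLe_length, hQR, Walk.length_reverse]
  exact hG b c hcyc (by rw [hclen]; exact hodd.add_one) (by omega) (by rw [hncard]; exact hodd)

/-- Two internally-disjoint `R`-paths from `x` and `y` to a common `w` (with `xy ∈ G \ R`)
must have lengths of equal parity, otherwise a good cycle appears. -/
lemma parity_eq (hRG : R ≤ G) {ℓ : ℕ} (hℓ : 0 < ℓ)
    (hG : ∀ (u : V) (c : G.Walk u u), c.IsCycle → Even c.length → c.length ≤ 2 * ℓ →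
      ¬ Odd ({e : Sym2 V | e ∈ c.edges ∧ e ∈ R.edgeSet}.ncard))
    {x y w : V} (hxy : G.Adj x y) (hnR : ¬ R.Adj x y)
    (P : R.Walk x w) (Q : R.Walk y w) (hP : P.IsPath) (hQ : Q.IsPath)
    (hPl : P.length ≤ ℓ) (hQl : Q.length ≤ ℓ - 1)
    (hdisj : ∀ z ∈ P.support, z ∈ Q.support → z = w) :
    P.length % 2 = Q.length % 2 := by
  by_contra hne
  exact cyc hRG hG hxy hnR P Q hP hQ hdisj (Nat.odd_iff.2 (by omega)) (by omega)

/-- Canonical parity: all `R`-paths from `x` to `v` of length at most `ℓ` avoiding `y`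
have the same length parity. -/
lemma key (hRG : R ≤ G) {ℓ : ℕ} (hℓ : 0 < ℓ)
    (hG : ∀ (u : V) (c : G.Walk u u), c.IsCycle → Even c.length → c.length ≤ 2 * ℓ →
      ¬ Odd ({e : Sym2 V | e ∈ c.edges ∧ e ∈ R.edgeSet}.ncard))
    (h1 : ∀ S : Set V, S.ncard ≤ 2 * ℓ → ∀ x y : V, x ∉ S → y ∉ S →
      ∃ p : R.Walk x y, p.IsPath ∧ p.length ≤ ℓ - 1 ∧ ∀ z ∈ p.support, z ∉ S)
    {x y : V} (hxy : G.Adj x y) (hnR : ¬ R.Adj x y) (v : V) :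
    ∃ n, n < 2 ∧ ∀ P : R.Walk x v, P.IsPath → P.length ≤ ℓ → y ∉ P.support →
      P.length % 2 = n := by
  by_cases hvy : v = y
  · refine ⟨0, by norm_num, ?_⟩
    intro P _ _ hyP
    exact absurd (hvy ▸ P.end_mem_support) hyP
  by_cases hvx : v = x
  · subst hvx
    refine ⟨0, by norm_num, ?_⟩
    intro P hP _ _
    rw [Walk.isPath_iff_eq_nil.1 hP]
    rfl
  · obtain ⟨P₀, hP₀, hP₀l, hP₀S⟩ := h1 {y} (by simp [Set.ncard_singleton]; omega) x v
      (by simp [hxy.ne]) (by simp [hvy])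
    have hyP₀ : y ∉ P₀.support := fun hy => (hP₀S y hy) rfl
    refine ⟨P₀.length % 2, Nat.mod_lt _ (by norm_num), ?_⟩
    intro P hP hPl hyP
    set S : Set V := ({z | z ∈ P.support} ∪ {z | z ∈ P₀.support}) \ {v} with hS
    have hcard : S.ncard ≤ 2 * ℓ := by
      have hsub : S ⊆ ({z | z ∈ P.support} \ {v}) ∪ {z | z ∈ P₀.support} := by
        intro z hz
        rcases hz with ⟨hz1 | hz1, hz2⟩
        · exact Or.inl ⟨hz1, hz2⟩
        · exact Or.inr hz1
      have h1c : ({z | z ∈ P.support} \ {v}).ncard ≤ ℓ := by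
        have hv : v ∈ {z | z ∈ P.support} := P.end_mem_support
        have := Set.ncard_diff_singleton_of_mem hv
        have h2 := ncard_support_le P
        omega
      have h2c : ({z | z ∈ P₀.support}).ncard ≤ ℓ := by
        have := ncard_support_le P₀
        omega
      calc S.ncard ≤ (({z | z ∈ P.support} \ {v}) ∪ {z | z ∈ P₀.support}).ncard :=
            Set.ncard_le_ncard hsub (Set.toFinite _)
        _ ≤ ({z | z ∈ P.support} \ {v}).ncard + ({z | z ∈ P₀.support}).ncard :=
            Set.ncard_union_le _ _
        _ ≤ 2 * ℓ := by omega
    obtain ⟨Q, hQ, hQl, hQS⟩ := h1 S hcard y v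
      (by simp only [hS, Set.mem_diff, Set.mem_union, Set.mem_setOf_eq]
          rintro ⟨hy | hy, -⟩ <;> [exact hyP hy; exact hyP₀ hy])
      (by simp [hS])
    have hd1 : ∀ z ∈ P.support, z ∈ Q.support → z = v := by
      intro z hzP hzQ
      by_contra hzv
      exact hQS z hzQ ⟨Or.inl hzP, hzv⟩
    have hd2 : ∀ z ∈ P₀.support, z ∈ Q.support → z = v := by
      intro z hzP hzQ
      by_contra hzv
      exact hQS z hzQ ⟨Or.inr hzP, hzv⟩
    have e1 := parity_eq hRG hℓ hG hxy hnR P Q hP hQ hPl hQl hd1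
    have e2 := parity_eq hRG hℓ hG hxy hnR P₀ Q hP₀ hQ (by omega) hQl hd2
    omega

end Aux

/-- The Cycle Lemma: if `R ⊆ G` is a highly connected "robust" subgraph which is neither
`G` nor a bipartite cut subgraph of `G`, then `G` has a short even cycle with an odd
number of `R`-edges. -/
theorem stmt9 (G R : SimpleGraph V) (ℓ : ℕ) (hℓ : 0 < ℓ) (hRG : R ≤ G)
    (h1 : ∀ S : Set V, S.ncard ≤ 2 * ℓ → ∀ x y : V, x ∉ S → y ∉ S →
      ∃ p : R.Walk x y, p.IsPath ∧ p.length ≤ ℓ - 1 ∧ ∀ z ∈ p.support, z ∉ S)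
    (h2 : R ≠ G)
    (h3 : ∀ A B : Set V, Disjoint A B → A ∪ B = Set.univ → R ≠ bipSub G A B) :
    ∃ (u : V) (c : G.Walk u u), c.IsCycle ∧ Even c.length ∧ c.length ≤ 2 * ℓ ∧
      Odd ({e : Sym2 V | e ∈ c.edges ∧ e ∈ R.edgeSet}.ncard) := by
  by_contra hcon
  push_neg at hcon
  have hG : ∀ (u : V) (c : G.Walk u u), c.IsCycle → Even c.length → c.length ≤ 2 * ℓ →
      ¬ Odd ({e : Sym2 V | e ∈ c.edges ∧ e ∈ R.edgeSet}.ncard) := by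
    intro u c hc he hl
    exact hcon u c hc he hl
  -- a `G`-edge not in `R`
  obtain ⟨x, y, hxy, hnR⟩ : ∃ x y, G.Adj x y ∧ ¬ R.Adj x y := by
    by_contra h
    push_neg at h
    exact h2 (le_antisymm hRG fun u v huv => h u v huv)
  have hnR' : ¬ R.Adj y x := fun h => hnR h.symm
  -- canonical parities
  choose f hflt hfspec using key hRG hℓ hG h1 hxy hnR
  choose g hglt hgspec using key hRG hℓ hG h1 hxy.symm hnR'
  have hfx : f x = 0 := by
    have := hfspec x Walk.nil Walk.IsPath.nil (by simp) (by simp [hxy.ne'])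
    simpa using this.symm
  have hgy : g y = 0 := by
    have := hgspec y Walk.nil Walk.IsPath.nil (by simp) (by simp [hxy.ne])
    simpa using this.symm
  -- the two parities agree away from x, y
  have feqg : ∀ v, v ≠ x → v ≠ y → f v = g v := by
    intro v hvx hvy
    obtain ⟨P, hP, hPl, hPS⟩ := h1 {y} (by simp [Set.ncard_singleton]; omega) x v
      (by simp [hxy.ne]) (by simp [hvy])
    have hyP : y ∉ P.support := fun hy => hPS y hy rfl
    have hfv : f v = P.length % 2 := (hfspec v P hP (by omega) hyP).symm
    set S : Set V := {z | z ∈ P.support} \ {v} with hS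
    have hcard : S.ncard ≤ 2 * ℓ := by
      rw [hS]
      have h1' := Set.ncard_diff_singleton_le {z | z ∈ P.support} v
      have h2' := ncard_support_le P
      omega
    obtain ⟨Q, hQ, hQl, hQS⟩ := h1 S hcard y v
      (by simp only [hS, Set.mem_diff, Set.mem_setOf_eq]; rintro ⟨hy, -⟩; exact hyP hy)
      (by simp [hS])
    have hxQ : x ∉ Q.support := fun hx =>
      hQS x hx ⟨P.start_mem_support, Ne.symm hvx⟩
    have hgv : g v = Q.length % 2 := (hgspec v Q hQ (by omega) hxQ).symm
    have hdisj : ∀ z ∈ P.support, z ∈ Q.support → z = v := by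
      intro z hzP hzQ
      by_contra hzv
      exact hQS z hzQ ⟨hzP, hzv⟩
    have := parity_eq hRG hℓ hG hxy hnR P Q hP hQ (by omega) hQl hdisj
    omega
  -- R-edges (away from y) join different f-parities
  have crossf : ∀ u v, R.Adj u v → u ≠ y → v ≠ y → f u ≠ f v := by
    intro u v h hu hv
    by_cases hux : u = x
    · subst hux
      have : f v = 1 := by
        have := hfspec v (Walk.cons h Walk.nil)
          (by simp [Walk.isPath_def, h.ne]) (by simp [Walk.length_cons, Walk.length_nil]; omega)
          (by simp [hxy.ne', Ne.symm hv])
        simpa using this.symm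
      omega
    by_cases hvx : v = x
    · subst hvx
      have : f u = 1 := by
        have := hfspec u (Walk.cons h.symm Walk.nil)
          (by simp [Walk.isPath_def, h.ne']) (by simp [Walk.length_cons, Walk.length_nil]; omega)
          (by simp [hxy.ne', Ne.symm hu])
        simpa using this.symm
      omega
    · obtain ⟨P, hP, hPl, hPS⟩ := h1 {y, v}
        (by
          have := Set.ncard_insert_le y ({v} : Set V)
          simp [Set.ncard_singleton] at this
          omega)
        x u (by simp only [Set.mem_insert_iff, Set.mem_singleton_iff]; push_neg; exact ⟨hxy.ne, fun hh => hvx hh.symm⟩) (by simp [hu, h.ne])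
      have hyP : y ∉ P.support := fun hy => hPS y hy (by simp)
      have hvP : v ∉ P.support := fun hv' => hPS v hv' (by simp)
      have hfu : f u = P.length % 2 := (hfspec u P hP (by omega) hyP).symm
      have hP' : (P.concat h).IsPath := by
        rw [Walk.isPath_def, Walk.support_concat,
          List.nodup_append]
        exact ⟨hP.support_nodup, by simp, by
          intro a ha b hb
          simp at hb
          subst hb
          exact fun hab => hvP (hab ▸ ha)⟩
      have hyP' : y ∉ (P.concat h).support := by
        rw [Walk.support_concat]
        simp only [List.mem_append, List.mem_singleton]
        rintro (hy | rfl)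
        · exact hyP hy
        · exact hv rfl
      have hfv : f v = (P.length + 1) % 2 := by
        have := hfspec v (P.concat h) hP' (by rw [Walk.length_concat]; omega) hyP'
        rw [Walk.length_concat] at this
        exact this.symm
      omega
  -- G-edges not in R with an end at x (resp. y) have f (resp. g) parity 0
  have fzero : ∀ v, v ≠ x → v ≠ y → G.Adj x v → ¬ R.Adj x v → f v = 0 := by
    intro v hvx hvy hGxv hnRxv
    obtain ⟨P, hP, hPl, hPS⟩ := h1 {y} (by simp [Set.ncard_singleton]; omega) x v
      (by simp [hxy.ne]) (by simp [hvy])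
    have hyP : y ∉ P.support := fun hy => hPS y hy rfl
    have hfv : f v = P.length % 2 := (hfspec v P hP (by omega) hyP).symm
    by_contra hne
    have hodd : P.length % 2 = 1 := by have := hflt v; omega
    exact cyc hRG hG hGxv hnRxv P (Walk.nil : R.Walk v v) hP Walk.IsPath.nil
      (by intro z _ hz; simpa using hz)
      (by rw [Nat.odd_iff]; simpa using hodd) (by simp; omega)
  have gzero : ∀ v, v ≠ x → v ≠ y → G.Adj y v → ¬ R.Adj y v → g v = 0 := by
    intro v hvx hvy hGyv hnRyv
    obtain ⟨Q, hQ, hQl, hQS⟩ := h1 {x} (by simp [Set.ncard_singleton]; omega) y v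
      (by simp [hxy.ne']) (by simp [hvx])
    have hxQ : x ∉ Q.support := fun hx => hQS x hx rfl
    have hgv : g v = Q.length % 2 := (hgspec v Q hQ (by omega) hxQ).symm
    by_contra hne
    have hodd : Q.length % 2 = 1 := by have := hglt v; omega
    exact cyc hRG hG hGyv hnRyv Q (Walk.nil : R.Walk v v) hQ Walk.IsPath.nil
      (by intro z _ hz; simpa using hz)
      (by rw [Nat.odd_iff]; simpa using hodd) (by simp; omega)
  -- the coloring
  set F : V → ℕ := fun v => if v = y then 0 else f v with hF
  have Flt : ∀ v, F v < 2 := by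
    intro v
    by_cases hv : v = y <;> simp [hF, hv, hflt v]
  have hFx : F x = 0 := by simp [hF, hxy.ne, hfx]
  have hFy : F y = 0 := by simp [hF]
  -- R-edges cross
  have gone : ∀ v, R.Adj y v → F v = 1 := by
    intro v h
    have hvy : v ≠ y := h.ne'
    have hvx : v ≠ x := by rintro rfl; exact hnR' h
    have hgv : g v = 1 := by
      have := hgspec v (Walk.cons h Walk.nil)
        (by simp [Walk.isPath_def, h.ne]) (by simp [Walk.length_cons, Walk.length_nil]; omega)
        (by simp [hxy.ne, Ne.symm hvx])
      simpa using this.symm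
    rw [hF]; simp only [if_neg hvy]
    rw [feqg v hvx hvy, hgv]
  have claimR : ∀ u v, R.Adj u v → F u ≠ F v := by
    intro u v h
    by_cases huy : u = y
    · have h' : R.Adj y v := huy ▸ h
      have h1' := gone v h'
      have h2' : F u = 0 := by rw [huy, hFy]
      omega
    by_cases hvy : v = y
    · have h' : R.Adj y u := hvy ▸ h.symm
      have h1' := gone u h'
      have h2' : F v = 0 := by rw [hvy, hFy]
      omega
    · have := crossf u v h huy hvy
      have e1 : F u = f u := by rw [hF]; simp only [if_neg huy]
      have e2 : F v = f v := by rw [hF]; simp only [if_neg hvy]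
      omega
  -- non-R G-edges do not cross
  have claimNR : ∀ u v, G.Adj u v → ¬ R.Adj u v → F u = F v := by
    intro u v hGuv hnRuv
    by_cases huy : u = y
    · by_cases hvx : v = x
      · rw [huy, hvx, hFy, hFx]
      · have hvy : v ≠ y := by rintro rfl; exact hGuv.ne' huy.symm
        have hGyv : G.Adj y v := huy ▸ hGuv
        have hnRyv : ¬ R.Adj y v := fun hh => hnRuv (huy ▸ hh : _)
        have : F v = 0 := by
          rw [hF]; simp only [if_neg hvy]
          rw [feqg v hvx hvy]
          exact gzero v hvx hvy hGyv hnRyv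
        rw [huy, hFy, this]
    by_cases hvy : v = y
    · by_cases hux : u = x
      · rw [hvy, hux, hFx, hFy]
      · have hGyu : G.Adj y u := hvy ▸ hGuv.symm
        have hnRyu : ¬ R.Adj y u := fun hh => hnRuv (hvy ▸ hh.symm : _)
        have : F u = 0 := by
          rw [hF]; simp only [if_neg huy]
          rw [feqg u hux huy]
          exact gzero u hux huy hGyu hnRyu
        rw [hvy, hFy, this]
    by_cases hux : u = x
    · have hvx : v ≠ x := by rintro rfl; exact hGuv.ne' hux.symm
      have hGxv : G.Adj x v := hux ▸ hGuv
      have hnRxv : ¬ R.Adj x v := fun hh => hnRuv (hux ▸ hh : _)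
      have : F v = 0 := by
        rw [hF]; simp only [if_neg hvy]
        exact fzero v hvx hvy hGxv hnRxv
      rw [hux, hFx, this]
    by_cases hvx : v = x
    · have hGxu : G.Adj x u := hvx ▸ hGuv.symm
      have hnRxu : ¬ R.Adj x u := fun hh => hnRuv (hvx ▸ hh.symm : _)
      have : F u = 0 := by
        rw [hF]; simp only [if_neg huy]
        exact fzero u hux huy hGxu hnRxu
      rw [hvx, hFx, this]
    -- generic case
    · obtain ⟨P1, hP1, hP1l, hP1S⟩ := h1 {y, v}
        (by
          have := Set.ncard_insert_le y ({v} : Set V)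
          simp [Set.ncard_singleton] at this
          omega)
        x u (by simp only [Set.mem_insert_iff, Set.mem_singleton_iff]; push_neg; exact ⟨hxy.ne, fun hh => hvx hh.symm⟩) (by simp [huy, hGuv.ne])
      have hyP1 : y ∉ P1.support := fun hy => hP1S y hy (by simp)
      have hvP1 : v ∉ P1.support := fun hv' => hP1S v hv' (by simp)
      have hfu : f u = P1.length % 2 := (hfspec u P1 hP1 (by omega) hyP1).symm
      set S2 : Set V := ({z | z ∈ P1.support} \ {x}) ∪ {y} with hS2
      have hcard2 : S2.ncard ≤ 2 * ℓ := by
        rw [hS2]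
        have ha := Set.ncard_union_le ({z | z ∈ P1.support} \ {x}) ({y} : Set V)
        have hb := Set.ncard_diff_singleton_le {z | z ∈ P1.support} x
        have hcc := ncard_support_le P1
        simp only [Set.ncard_singleton] at ha
        omega
      obtain ⟨P2, hP2, hP2l, hP2S⟩ := h1 S2 hcard2 x v
        (by simp [hS2, hxy.ne])
        (by simp only [hS2, Set.mem_union, Set.mem_diff, Set.mem_setOf_eq,
              Set.mem_singleton_iff]
            rintro (⟨hv', -⟩ | rfl)
            · exact hvP1 hv'
            · exact hvy rfl)
      have hyP2 : y ∉ P2.support := fun hy => hP2S y hy (Or.inr rfl)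
      have hfv : f v = P2.length % 2 := (hfspec v P2 hP2 (by omega) hyP2).symm
      have heq : f u = f v := by
        by_contra hne
        have hdisj : ∀ z ∈ P1.reverse.support, z ∈ P2.reverse.support → z = x := by
          intro z hz1 hz2
          rw [Walk.support_reverse, List.mem_reverse] at hz1 hz2
          by_contra hzx
          exact hP2S z hz2 (Or.inl ⟨hz1, hzx⟩)
        refine cyc hRG hG hGuv hnRuv P1.reverse P2.reverse hP1.reverse hP2.reverse
          hdisj ?_ ?_
        · rw [Walk.length_reverse, Walk.length_reverse, Nat.odd_iff]
          omega
        · rw [Walk.length_reverse, Walk.length_reverse]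
          omega
      simp [hF, if_neg huy, if_neg hvy, heq]
  -- assemble the bipartition, contradicting h3
  set A : Set V := {v | F v = 0} with hA
  set B : Set V := {v | F v ≠ 0} with hB
  have hdisjAB : Disjoint A B := by
    rw [Set.disjoint_left]
    intro a ha hb
    exact hb ha
  have hunion : A ∪ B = Set.univ := by
    ext z
    simp only [Set.mem_union, hA, hB, Set.mem_setOf_eq, Set.mem_univ, iff_true]
    tauto
  have hbip : R = bipSub G A B := by
    have hAdj : ∀ u v, R.Adj u v ↔ (bipSub G A B).Adj u v := by
      intro u v
      constructor
      · intro h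
        have hcross := claimR u v h
        refine ⟨hRG h, ?_⟩
        simp only [hA, hB, Set.mem_setOf_eq]
        by_cases h0 : F u = 0
        · exact Or.inl ⟨h0, by have h1u := Flt u; have h1v := Flt v; omega⟩
        · exact Or.inr ⟨h0, by have h1u := Flt u; have h1v := Flt v; omega⟩
      · rintro ⟨hGuv, hpat⟩
        by_contra hnuv
        have := claimNR u v hGuv hnuv
        simp only [hA, hB, Set.mem_setOf_eq] at hpat
        rcases hpat with ⟨h0, h1'⟩ | ⟨h0, h1'⟩
        · exact h1' (by rw [← this]; exact h0)
        · exact h0 (by rw [this]; exact h1')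
    ext u v
    exact hAdj u v
  exact h3 A B hdisjAB hunion hbip
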